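/- arXiv:1409.5271 — 2 statements merged into one kernel-verified Lean document; each statement's English description precedes it below -/
import Mathlib

section
/- Let ⟨·⟩ be a stationary ensemble on Ω = [λ,∞)^E, fix ξ ∈ R^d with |ξ| ≤ 1, and let φ(a;·) be the corrector. Then for every 1 ≤ p < ∞, Σ_{i=1}^d ⟨(Σ_{e∈E} (∂_e(D_iφ + ξ_i))²)^p⟩ ≤ λ^{−2p} Σ_{i=1}^d ⟨|D_iφ + ξ_i|^{2p}⟩. -/
open MeasureTheory Filter Set

noncomputable section

namespace DiscHom

/-- Vertices of the discrete torus `(ℤ/Lℤ)^d`. -/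
abbrev DV (d L : ℕ) := Fin d → ZMod L

/-- Edges of the discrete torus: the edge `(x, i)` is `[x, x+e_i]`. -/
abbrev DE (d L : ℕ) := DV d L × Fin d

/-- The `i`-th coordinate unit vector. -/
def dunit (d L : ℕ) (i : Fin d) : DV d L := Pi.single i 1

/-- Discrete gradient: `∇u([x,x+e_i]) = u(x+e_i) - u(x)`. -/
def dgrad (d L : ℕ) (u : DV d L → ℝ) (b : DE d L) : ℝ :=
  u (b.1 + dunit d L b.2) - u b.1

/-- Negative discrete divergence:
`(∇*g)(x) = Σ_i (g([x-e_i,x]) - g([x,x+e_i]))`. -/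
def dstar (d L : ℕ) (g : DE d L → ℝ) (x : DV d L) : ℝ :=
  ∑ i : Fin d, (g (x - dunit d L i, i) - g (x, i))

/-- `φ` is the corrector for the coefficient field `a` in direction `ξ`:
`∇*(a(∇φ + ξ)) = 0` with the normalization `φ(0) = 0`. -/
def IsDCorrector (d L : ℕ) (a : DE d L → ℝ) (ξ : Fin d → ℝ) (φ : DV d L → ℝ) : Prop :=
  φ 0 = 0 ∧ ∀ x : DV d L, dstar d L (fun b => a b * (dgrad d L φ b + ξ b.2)) x = 0

/-- Mixed second difference of a two-point function: discrete gradient in the first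
variable along the edge `b` of the discrete gradient in the second variable along the
edge `e`. -/
def ddG (d L : ℕ) (G : DV d L → DV d L → ℝ) (b e : DE d L) : ℝ :=
  dgrad d L (fun x => dgrad d L (G x) e) b

end DiscHom

set_option linter.unusedSectionVars false
set_option linter.unusedVariables false
set_option maxHeartbeats 1000000
set_option synthInstance.maxHeartbeats 400000

namespace DiscHom

variable (d L : ℕ) [NeZero L]

/-- shift of an edge -/
def shE (z : DV d L) (b : DE d L) : DE d L := (b.1 + z, b.2)

lemma sum_shift_V (h : DV d L → ℝ) (z : DV d L) : ∑ x, h (x + z) = ∑ x, h x :=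
  Fintype.sum_equiv (Equiv.addRight z) _ _ (fun _ => rfl)

lemma ibp (g : DE d L → ℝ) (v : DV d L → ℝ) :
    ∑ x, dstar d L g x * v x = ∑ b, g b * dgrad d L v b := by
  rw [Fintype.sum_prod_type, Finset.sum_comm]
  simp only [dstar, Finset.sum_mul, sub_mul]
  rw [Finset.sum_comm]
  refine Finset.sum_congr rfl fun i _ => ?_
  rw [Finset.sum_sub_distrib]
  have : ∑ x : DV d L, g (x - dunit d L i, i) * v x
      = ∑ x : DV d L, g (x, i) * v (x + dunit d L i) := by
    rw [← sum_shift_V d L (fun x => g (x - dunit d L i, i) * v x) (dunit d L i)]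
    simp [add_sub_cancel_right]
  rw [this, ← Finset.sum_sub_distrib]
  refine Finset.sum_congr rfl fun x _ => ?_
  simp [dgrad]; ring

lemma sum_dstar (g : DE d L → ℝ) : ∑ x, dstar d L g x = 0 := by
  have h := ibp d L g (fun _ => 1)
  simp only [mul_one, dgrad, sub_self, mul_zero, Finset.sum_const_zero] at h
  exact h


/-- The operator `u ↦ ∇*(a ∇u)`. -/
def Lop (a : DE d L → ℝ) (u : DV d L → ℝ) : DV d L → ℝ :=
  fun x => dstar d L (fun b => a b * dgrad d L u b) x

/-- The modified operator `u ↦ ∇*(a ∇u) + u 0`. -/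
def Top (a : DE d L → ℝ) (u : DV d L → ℝ) : DV d L → ℝ :=
  fun x => Lop d L a u x + u 0

lemma dgrad_add' (u v : DV d L → ℝ) (b) :
    dgrad d L (u + v) b = dgrad d L u b + dgrad d L v b := by
  simp only [dgrad, Pi.add_apply]; ring

lemma dgrad_smul' (c : ℝ) (u : DV d L → ℝ) (b) :
    dgrad d L (c • u) b = c * dgrad d L u b := by
  simp only [dgrad, Pi.smul_apply, smul_eq_mul]; ring

lemma dstar_fun_add (g h : DE d L → ℝ) (x) :
    dstar d L (fun b => g b + h b) x = dstar d L g x + dstar d L h x := by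
  simp only [dstar, ← Finset.sum_add_distrib]
  exact Finset.sum_congr rfl fun i _ => by ring

lemma dstar_fun_smul (c : ℝ) (g : DE d L → ℝ) (x) :
    dstar d L (fun b => c * g b) x = c * dstar d L g x := by
  simp only [dstar, Finset.mul_sum]
  exact Finset.sum_congr rfl fun i _ => by ring

/-- `Top` as a linear map in `u`. -/
def TopL (a : DE d L → ℝ) : (DV d L → ℝ) →ₗ[ℝ] (DV d L → ℝ) where
  toFun := Top d L a
  map_add' u v := by
    funext x
    have h1 : (fun b => a b * dgrad d L (u + v) b)
        = fun b => (a b * dgrad d L u b) + (a b * dgrad d L v b) := by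
      funext b; rw [dgrad_add']; ring
    simp only [Top, Lop, Pi.add_apply, h1, dstar_fun_add]
    ring
  map_smul' c u := by
    funext x
    have h1 : (fun b => a b * dgrad d L (c • u) b)
        = fun b => c * (a b * dgrad d L u b) := by
      funext b; rw [dgrad_smul']; ring
    simp only [Top, Lop, Pi.smul_apply, h1, dstar_fun_smul, smul_eq_mul, RingHom.id_apply]
    ring

/-- `Top` as a continuous linear map. -/
def TopC (a : DE d L → ℝ) : (DV d L → ℝ) →L[ℝ] (DV d L → ℝ) :=
  (TopL d L a).toContinuousLinearMap

lemma TopC_apply (a : DE d L → ℝ) (u : DV d L → ℝ) : TopC d L a u = Top d L a u := rfl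

lemma energy (a : DE d L → ℝ) (u v : DV d L → ℝ) :
    ∑ x, Lop d L a u x * v x = ∑ b, a b * dgrad d L u b * dgrad d L v b :=
  ibp d L (fun b => a b * dgrad d L u b) v

lemma sum_Lop (a : DE d L → ℝ) (u : DV d L → ℝ) : ∑ x, Lop d L a u x = 0 :=
  sum_dstar d L _

lemma const_of_dgrad_eq_zero (u : DV d L → ℝ) (h : ∀ b, dgrad d L u b = 0) (x : DV d L) :
    u x = u 0 := by
  have h1 : ∀ (y : DV d L) (i : Fin d), u (y + dunit d L i) = u y := by
    intro y i
    have := h (y, i)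
    simp only [dgrad] at this
    linarith
  have h2 : ∀ (k : ℕ) (y : DV d L) (i : Fin d), u (y + k • dunit d L i) = u y := by
    intro k
    induction k with
    | zero => intro y i; simp
    | succ n ih =>
      intro y i
      have : y + (n + 1) • dunit d L i = (y + n • dunit d L i) + dunit d L i := by
        rw [succ_nsmul, ← add_assoc]
      rw [this, h1, ih]
  have h3 : ∀ (s : Finset (Fin d)) (c : Fin d → ℕ),
      u (∑ i ∈ s, c i • dunit d L i) = u 0 := by
    intro s
    induction s using Finset.induction_on with
    | empty => intro c; simp
    | insert _ _ hns ih =>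
      intro c
      rename_i j t
      rw [Finset.sum_insert hns, add_comm, h2, ih]
  have hx : x = ∑ i : Fin d, (x i).val • dunit d L i := by
    funext j
    rw [Finset.sum_apply]
    have he : ∀ i : Fin d, ((x i).val • dunit d L i) j = if i = j then x j else 0 := by
      intro i
      by_cases hij : i = j
      · subst hij
        simp [dunit, nsmul_eq_mul, ZMod.natCast_val, ZMod.cast_id]
      · simp [dunit, Pi.single_apply, hij]
    simp only [he]
    simp
  rw [hx]
  exact h3 Finset.univ _

lemma card_V_pos : 0 < (Fintype.card (DV d L) : ℝ) := by
  have : 0 < Fintype.card (DV d L) := Fintype.card_pos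
  exact_mod_cast this

lemma sum_Top (a : DE d L → ℝ) (u : DV d L → ℝ) :
    ∑ x, Top d L a u x = (Fintype.card (DV d L) : ℝ) * u 0 := by
  simp only [Top]
  rw [Finset.sum_add_distrib, sum_Lop, Finset.sum_const, zero_add]
  simp [nsmul_eq_mul]

lemma Top_inj (a : DE d L → ℝ) (ha : ∀ b, 0 < a b) (u : DV d L → ℝ)
    (h : ∀ x, Top d L a u x = 0) : u = 0 := by
  have h0 : u 0 = 0 := by
    have hs : ∑ x, Top d L a u x = 0 := by
      simp [h]
    rw [sum_Top] at hs
    have := card_V_pos d L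
    rcases mul_eq_zero.1 hs with h' | h'
    · linarith
    · exact h'
  have hLop : ∀ x, Lop d L a u x = 0 := by
    intro x
    have := h x
    simp only [Top, h0, add_zero] at this
    exact this
  have hen : ∑ b, a b * dgrad d L u b * dgrad d L u b = 0 := by
    rw [← energy]
    simp [hLop]
  have hgz : ∀ b, dgrad d L u b = 0 := by
    intro b
    have hnn : ∀ b ∈ Finset.univ (α := DE d L), 0 ≤ a b * dgrad d L u b * dgrad d L u b := by
      intro b _
      have := (ha b).le
      nlinarith [sq_nonneg (dgrad d L u b)]
    have := (Finset.sum_eq_zero_iff_of_nonneg hnn).1 hen b (Finset.mem_univ b)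
    have hab := ha b
    rw [mul_assoc] at this
    rcases mul_eq_zero.1 this with h' | h'
    · exact absurd h' (ne_of_gt hab)
    · exact mul_self_eq_zero.1 h'
  funext x
  have := const_of_dgrad_eq_zero d L u hgz x
  rw [this, h0]
  rfl

lemma isUnit_TopC (a : DE d L → ℝ) (ha : ∀ b, 0 < a b) : IsUnit (TopC d L a) := by
  have hinj : Function.Injective (TopL d L a) := by
    rw [← LinearMap.ker_eq_bot, LinearMap.ker_eq_bot']
    intro u hu
    exact Top_inj d L a ha u (fun x => congrFun hu x)
  have hbij : Function.Bijective (TopL d L a) :=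
    ⟨hinj, LinearMap.injective_iff_surjective.mp hinj⟩
  let e0 : (DV d L → ℝ) ≃ₗ[ℝ] (DV d L → ℝ) := LinearEquiv.ofBijective _ hbij
  let e : (DV d L → ℝ) ≃L[ℝ] (DV d L → ℝ) := e0.toContinuousLinearEquiv
  refine ⟨⟨TopC d L a, e.symm.toContinuousLinearMap, ?_, ?_⟩, rfl⟩
  · refine ContinuousLinearMap.ext fun u => ?_
    have : (TopC d L a) (e.symm u) = e (e.symm u) := rfl
    simp only [ContinuousLinearMap.mul_apply, ContinuousLinearMap.one_apply,
      ContinuousLinearEquiv.coe_coe, this]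
    exact e.apply_symm_apply u
  · refine ContinuousLinearMap.ext fun u => ?_
    have : (TopC d L a) u = e u := rfl
    simp only [ContinuousLinearMap.mul_apply, ContinuousLinearMap.one_apply,
      ContinuousLinearEquiv.coe_coe, this]
    exact e.symm_apply_apply u

/-- Solving `Top a u = f`. -/
lemma Top_solve (a : DE d L → ℝ) (ha : ∀ b, 0 < a b) (f : DV d L → ℝ) :
    ∀ x, Top d L a (Ring.inverse (TopC d L a) f) x = f x := by
  intro x
  have h := Ring.mul_inverse_cancel (TopC d L a) (isUnit_TopC d L a ha)
  have := congrFun (congrArg (fun (T : (DV d L → ℝ) →L[ℝ] (DV d L → ℝ)) => (T f : DV d L → ℝ)) h) x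
  simpa [TopC_apply] using this

lemma Top_unique (a : DE d L → ℝ) (ha : ∀ b, 0 < a b) (u f : DV d L → ℝ)
    (h : ∀ x, Top d L a u x = f x) : u = Ring.inverse (TopC d L a) f := by
  have h2 := Top_solve d L a ha f
  have : ∀ x, Top d L a (u - Ring.inverse (TopC d L a) f) x = 0 := by
    intro x
    have hsub : Top d L a (u - Ring.inverse (TopC d L a) f) x
        = Top d L a u x - Top d L a (Ring.inverse (TopC d L a) f) x := by
      have := congrFun (map_sub (TopL d L a) u (Ring.inverse (TopC d L a) f)) x
      exact this
    rw [hsub, h, h2, sub_self]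
  have := Top_inj d L a ha _ this
  rw [sub_eq_zero] at this
  exact this

/-- If `∑ f = 0` then the solution has `u 0 = 0` and satisfies `Lop a u = f`. -/
lemma Lop_solve (a : DE d L → ℝ) (ha : ∀ b, 0 < a b) (f : DV d L → ℝ)
    (hf : ∑ x, f x = 0) :
    (Ring.inverse (TopC d L a) f) 0 = 0 ∧
      ∀ x, Lop d L a (Ring.inverse (TopC d L a) f) x = f x := by
  set u := Ring.inverse (TopC d L a) f with hu
  have hT := Top_solve d L a ha f
  have h0 : u 0 = 0 := by
    have hs : ∑ x, Top d L a u x = ∑ x, f x := Finset.sum_congr rfl fun x _ => hT x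
    rw [sum_Top, hf] at hs
    have := card_V_pos d L
    rcases mul_eq_zero.1 hs with h' | h'
    · linarith
    · exact h'
  refine ⟨h0, fun x => ?_⟩
  have h2 := hT x
  rw [← hu] at h2
  simp only [Top, h0, add_zero] at h2
  exact h2

/-- The right-hand side `-∇*(a ξ)`. -/
def fxi (a : DE d L → ℝ) (ξ : Fin d → ℝ) : DV d L → ℝ :=
  fun x => -(dstar d L (fun b => a b * ξ b.2) x)

/-- The canonical corrector. -/
def Phit (ξ : Fin d → ℝ) (a : DE d L → ℝ) : DV d L → ℝ :=
  Ring.inverse (TopC d L a) (fxi d L a ξ)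

/-- The Green-type auxiliary function for an edge `e`. -/
def Ue (a : DE d L → ℝ) (e : DE d L) : DV d L → ℝ :=
  Ring.inverse (TopC d L a) (dstar d L (Pi.single e 1))

/-- Mixed second gradient of the Green function. -/
def Gf (a : DE d L → ℝ) (b e : DE d L) : ℝ := dgrad d L (Ue d L a e) b

/-- The flux `∇φ + ξ`. -/
def Ff (ξ : Fin d → ℝ) (a : DE d L → ℝ) (e : DE d L) : ℝ :=
  dgrad d L (Phit d L ξ a) e + ξ e.2

lemma sum_fxi (a : DE d L → ℝ) (ξ : Fin d → ℝ) : ∑ x, fxi d L a ξ x = 0 := by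
  simp only [fxi, Finset.sum_neg_distrib]
  rw [sum_dstar]
  simp

lemma Phit_spec (a : DE d L → ℝ) (ha : ∀ b, 0 < a b) (ξ : Fin d → ℝ) :
    Phit d L ξ a 0 = 0 ∧ ∀ x, Lop d L a (Phit d L ξ a) x = fxi d L a ξ x :=
  Lop_solve d L a ha _ (sum_fxi d L a ξ)

lemma Phit_isCorrector (a : DE d L → ℝ) (ha : ∀ b, 0 < a b) (ξ : Fin d → ℝ) :
    IsDCorrector d L a ξ (Phit d L ξ a) := by
  obtain ⟨h0, hL⟩ := Phit_spec d L a ha ξ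
  refine ⟨h0, fun x => ?_⟩
  have hsplit : (fun b => a b * (dgrad d L (Phit d L ξ a) b + ξ b.2))
      = fun b => (a b * dgrad d L (Phit d L ξ a) b) + (a b * ξ b.2) := by
    funext b; ring
  rw [hsplit, dstar_fun_add]
  have := hL x
  simp only [Lop] at this
  rw [this]
  simp [fxi]

lemma corrector_eq_Phit (a : DE d L → ℝ) (ha : ∀ b, 0 < a b) (ξ : Fin d → ℝ)
    (φ : DV d L → ℝ) (hφ : IsDCorrector d L a ξ φ) : φ = Phit d L ξ a := by
  refine Top_unique d L a ha φ _ fun x => ?_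
  have hsplit : (fun b => a b * (dgrad d L φ b + ξ b.2))
      = fun b => (a b * dgrad d L φ b) + (a b * ξ b.2) := by
    funext b; ring
  have h2 := hφ.2 x
  rw [hsplit, dstar_fun_add] at h2
  simp only [Top, Lop, hφ.1, add_zero]
  simp only [fxi]
  linarith

lemma sum_dstar_single (e : DE d L) : ∑ x, dstar d L (Pi.single e (1:ℝ)) x = 0 :=
  sum_dstar d L _

lemma Ue_spec (a : DE d L → ℝ) (ha : ∀ b, 0 < a b) (e : DE d L) :
    Ue d L a e 0 = 0 ∧ ∀ x, Lop d L a (Ue d L a e) x = dstar d L (Pi.single e 1) x :=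
  Lop_solve d L a ha _ (sum_dstar_single d L e)

/-- Key representation: `∑_b a b ∇(Ue e) b ∇v b = ∇v e`. -/
lemma Ue_energy (a : DE d L → ℝ) (ha : ∀ b, 0 < a b) (e : DE d L) (v : DV d L → ℝ) :
    ∑ b, a b * Gf d L a b e * dgrad d L v b = dgrad d L v e := by
  have h1 : ∑ x, Lop d L a (Ue d L a e) x * v x
      = ∑ b, a b * Gf d L a b e * dgrad d L v b := energy d L a _ v
  have h2 : ∑ x, Lop d L a (Ue d L a e) x * v x
      = ∑ x, dstar d L (Pi.single e 1) x * v x :=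
    Finset.sum_congr rfl fun x _ => by rw [(Ue_spec d L a ha e).2 x]
  have h3 := ibp d L (Pi.single e 1) v
  have h4 : ∑ b, (Pi.single e 1 : DE d L → ℝ) b * dgrad d L v b = dgrad d L v e := by
    rw [Finset.sum_eq_single e]
    · simp
    · intro b _ hb; simp [Pi.single_apply, hb]
    · intro h; exact absurd (Finset.mem_univ e) h
  rw [← h1, h2, h3, h4]

lemma Gf_symm (a : DE d L → ℝ) (ha : ∀ b, 0 < a b) (b e : DE d L) :
    Gf d L a b e = Gf d L a e b := by
  have h1 : ∑ c, a c * Gf d L a c e * Gf d L a c b = Gf d L a e b :=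
    Ue_energy d L a ha e (Ue d L a b)
  have h2 : ∑ c, a c * Gf d L a c b * Gf d L a c e = Gf d L a b e :=
    Ue_energy d L a ha b (Ue d L a e)
  rw [← h1, ← h2]
  exact Finset.sum_congr rfl fun c _ => by ring

lemma Gf_diag (a : DE d L → ℝ) (ha : ∀ b, 0 < a b) (e : DE d L) :
    ∑ b, a b * Gf d L a b e ^ 2 = Gf d L a e e := by
  have h : ∑ b, a b * Gf d L a b e * Gf d L a b e = Gf d L a e e :=
    Ue_energy d L a ha e (Ue d L a e)
  rw [← h]
  exact Finset.sum_congr rfl fun b _ => by ring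

lemma Gf_diag_le (lam : ℝ) (hlam : 0 < lam) (a : DE d L → ℝ) (ha : ∀ b, lam ≤ a b)
    (e : DE d L) : Gf d L a e e ≤ lam⁻¹ := by
  have ha' : ∀ b, 0 < a b := fun b => lt_of_lt_of_le hlam (ha b)
  have hdiag := Gf_diag d L a ha' e
  set X := Gf d L a e e with hX
  have hXnn : 0 ≤ X := by
    rw [← hdiag]
    exact Finset.sum_nonneg fun b _ => mul_nonneg (ha' b).le (sq_nonneg _)
  have hterm : lam * X ^ 2 ≤ X := by
    calc lam * X ^ 2 ≤ a e * Gf d L a e e ^ 2 := by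
          refine mul_le_mul (ha e) le_rfl (sq_nonneg _) (ha' e).le
      _ ≤ ∑ b, a b * Gf d L a b e ^ 2 := by
          refine Finset.single_le_sum (f := fun b => a b * Gf d L a b e ^ 2)
            (fun b _ => mul_nonneg (ha' b).le (sq_nonneg _)) (Finset.mem_univ e)
      _ = X := hdiag
  by_contra hcon
  push_neg at hcon
  have h1 : lam⁻¹ < X := hcon
  have h2 : 1 < lam * X := by
    rw [← mul_inv_cancel₀ (ne_of_gt hlam)]
    exact mul_lt_mul_of_pos_left h1 hlam
  nlinarith

lemma Gf_sq_sum_le (lam : ℝ) (hlam : 0 < lam) (a : DE d L → ℝ) (ha : ∀ b, lam ≤ a b)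
    (e : DE d L) : ∑ b, Gf d L a b e ^ 2 ≤ (lam ^ 2)⁻¹ := by
  have ha' : ∀ b, 0 < a b := fun b => lt_of_lt_of_le hlam (ha b)
  have h1 : lam * ∑ b, Gf d L a b e ^ 2 ≤ ∑ b, a b * Gf d L a b e ^ 2 := by
    rw [Finset.mul_sum]
    exact Finset.sum_le_sum fun b _ => mul_le_mul_of_nonneg_right (ha b) (sq_nonneg _)
  rw [Gf_diag d L a ha'] at h1
  have h2 := Gf_diag_le d L lam hlam a ha e
  have h3 : ∑ b, Gf d L a b e ^ 2 ≤ lam⁻¹ * lam⁻¹ := by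
    rw [← mul_le_mul_iff_right₀ hlam]
    calc lam * ∑ b, Gf d L a b e ^ 2 ≤ Gf d L a e e := h1
      _ ≤ lam⁻¹ := h2
      _ = lam * (lam⁻¹ * lam⁻¹) := by field_simp
  calc ∑ b, Gf d L a b e ^ 2 ≤ lam⁻¹ * lam⁻¹ := h3
    _ = (lam ^ 2)⁻¹ := by rw [sq, mul_inv]

lemma Gf_sq_sum_le' (lam : ℝ) (hlam : 0 < lam) (a : DE d L → ℝ) (ha : ∀ b, lam ≤ a b)
    (b : DE d L) : ∑ e, Gf d L a b e ^ 2 ≤ (lam ^ 2)⁻¹ := by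
  have ha' : ∀ c, 0 < a c := fun c => lt_of_lt_of_le hlam (ha c)
  have : ∑ e, Gf d L a b e ^ 2 = ∑ e, Gf d L a e b ^ 2 :=
    Finset.sum_congr rfl fun e _ => by rw [Gf_symm d L a ha' b e]
  rw [this]
  exact Gf_sq_sum_le d L lam hlam a ha b

lemma shE_injective (z : DV d L) : Function.Injective (shE d L z) := by
  intro b c h
  simp only [shE, Prod.mk.injEq] at h
  exact Prod.ext (by have := h.1; exact add_right_cancel this) h.2

lemma dgrad_shift (u : DV d L → ℝ) (z : DV d L) (b : DE d L) :
    dgrad d L (fun x => u (x + z)) b = dgrad d L u (shE d L z b) := by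
  simp only [dgrad, shE]
  rw [add_right_comm]

lemma dstar_shift (g : DE d L → ℝ) (z : DV d L) (x : DV d L) :
    dstar d L (fun b => g (shE d L z b)) x = dstar d L g (x + z) := by
  simp only [dstar, shE]
  refine Finset.sum_congr rfl fun i _ => ?_
  rw [sub_add_eq_add_sub]

lemma single_shE (e : DE d L) (z : DV d L) (b : DE d L) :
    (Pi.single (shE d L z e) (1:ℝ) : DE d L → ℝ) (shE d L z b)
      = (Pi.single e (1:ℝ) : DE d L → ℝ) b := by
  rcases eq_or_ne b e with h | h
  · subst h; simp
  · rw [Pi.single_apply, Pi.single_apply, if_neg, if_neg h]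
    exact fun hc => h (shE_injective d L z hc)

lemma single_shE_fun (e : DE d L) (z : DV d L) :
    (fun b => (Pi.single (shE d L z e) (1:ℝ) : DE d L → ℝ) (shE d L z b))
      = (Pi.single e (1:ℝ) : DE d L → ℝ) :=
  funext fun b => single_shE d L e z b

lemma Phit_shift (a : DE d L → ℝ) (ha : ∀ b, 0 < a b) (ξ : Fin d → ℝ) (z : DV d L) :
    Phit d L ξ (fun b => a (shE d L z b))
      = fun x => Phit d L ξ a (x + z) - Phit d L ξ a z := by
  have haz : ∀ b, 0 < a (shE d L z b) := fun b => ha _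
  refine (corrector_eq_Phit d L _ haz ξ _ ⟨by simp, fun x => ?_⟩).symm
  set w : DV d L → ℝ := fun x => Phit d L ξ a (x + z) - Phit d L ξ a z with hw
  have hgw : ∀ b, dgrad d L w b = dgrad d L (Phit d L ξ a) (shE d L z b) := by
    intro b
    simp only [hw, dgrad, shE]
    rw [add_right_comm]
    ring
  have hfun : (fun b => a (shE d L z b) * (dgrad d L w b + ξ b.2))
      = fun b => (fun c => a c * (dgrad d L (Phit d L ξ a) c + ξ c.2)) (shE d L z b) := by
    funext b
    rw [hgw b]
    rfl
  calc dstar d L (fun b => a (shE d L z b) * (dgrad d L w b + ξ b.2)) x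
      = dstar d L (fun b =>
          (fun c => a c * (dgrad d L (Phit d L ξ a) c + ξ c.2)) (shE d L z b)) x := by
        rw [hfun]
    _ = dstar d L (fun c => a c * (dgrad d L (Phit d L ξ a) c + ξ c.2)) (x + z) :=
        dstar_shift d L (fun c => a c * (dgrad d L (Phit d L ξ a) c + ξ c.2)) z x
    _ = 0 := (Phit_isCorrector d L a ha ξ).2 (x + z)

lemma Ue_shift (a : DE d L → ℝ) (ha : ∀ b, 0 < a b) (e : DE d L) (z : DV d L) :
    Ue d L (fun b => a (shE d L z b)) e
      = fun x => Ue d L a (shE d L z e) (x + z) - Ue d L a (shE d L z e) z := by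
  have haz : ∀ b, 0 < a (shE d L z b) := fun b => ha _
  set w : DV d L → ℝ := fun x => Ue d L a (shE d L z e) (x + z) - Ue d L a (shE d L z e) z
    with hw
  refine (Top_unique d L _ haz w _ fun x => ?_).symm
  have hw0 : w 0 = 0 := by simp [hw]
  have hgw : ∀ b, dgrad d L w b = dgrad d L (Ue d L a (shE d L z e)) (shE d L z b) := by
    intro b
    simp only [hw, dgrad, shE]
    rw [add_right_comm]
    ring
  have hfun : (fun b => a (shE d L z b) * dgrad d L w b)
      = fun b => (fun c => a c * dgrad d L (Ue d L a (shE d L z e)) c) (shE d L z b) := by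
    funext b
    rw [hgw b]
  have hLop : Lop d L (fun b => a (shE d L z b)) w x
      = dstar d L (Pi.single e 1) x := by
    calc Lop d L (fun b => a (shE d L z b)) w x
        = dstar d L (fun b =>
            (fun c => a c * dgrad d L (Ue d L a (shE d L z e)) c) (shE d L z b)) x := by
          simp only [Lop]
          rw [hfun]
      _ = dstar d L (fun c => a c * dgrad d L (Ue d L a (shE d L z e)) c) (x + z) :=
          dstar_shift d L (fun c => a c * dgrad d L (Ue d L a (shE d L z e)) c) z x
      _ = dstar d L (Pi.single (shE d L z e) 1) (x + z) :=
          (Ue_spec d L a ha (shE d L z e)).2 (x + z)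
      _ = dstar d L (fun b =>
            (Pi.single (shE d L z e) (1:ℝ) : DE d L → ℝ) (shE d L z b)) x :=
          (dstar_shift d L (Pi.single (shE d L z e) (1:ℝ)) z x).symm
      _ = dstar d L (Pi.single e 1) x := by rw [single_shE_fun]
  simp only [Top, hLop, hw0, add_zero]

lemma Ff_shift (a : DE d L → ℝ) (ha : ∀ b, 0 < a b) (ξ : Fin d → ℝ) (z : DV d L)
    (e : DE d L) : Ff d L ξ (fun b => a (shE d L z b)) e = Ff d L ξ a (shE d L z e) := by
  simp only [Ff]
  rw [Phit_shift d L a ha ξ z]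
  simp only [dgrad, shE]
  rw [add_right_comm]
  ring

lemma Gf_shift (a : DE d L → ℝ) (ha : ∀ b, 0 < a b) (z : DV d L) (b e : DE d L) :
    Gf d L (fun c => a (shE d L z c)) b e = Gf d L a (shE d L z b) (shE d L z e) := by
  simp only [Gf]
  rw [Ue_shift d L a ha e z]
  simp only [dgrad, shE]
  rw [add_right_comm]
  ring

/-- `Lop` as a linear map in `u`. -/
def LopL (a : DE d L → ℝ) : (DV d L → ℝ) →ₗ[ℝ] (DV d L → ℝ) where
  toFun := Lop d L a
  map_add' u v := by
    funext x
    have h1 : (fun b => a b * dgrad d L (u + v) b)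
        = fun b => (a b * dgrad d L u b) + (a b * dgrad d L v b) := by
      funext b; rw [dgrad_add']; ring
    simp only [Lop, h1, dstar_fun_add, Pi.add_apply]
  map_smul' c u := by
    funext x
    have h1 : (fun b => a b * dgrad d L (c • u) b)
        = fun b => c * (a b * dgrad d L u b) := by
      funext b; rw [dgrad_smul']; ring
    simp only [Lop, h1, dstar_fun_smul, Pi.smul_apply, smul_eq_mul, RingHom.id_apply]

/-- `Lop` as a continuous linear map in `u`. -/
def LopC (a : DE d L → ℝ) : (DV d L → ℝ) →L[ℝ] (DV d L → ℝ) :=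
  (LopL d L a).toContinuousLinearMap

/-- `a ↦ Lop a` as a linear map. -/
def Bl : (DE d L → ℝ) →ₗ[ℝ] ((DV d L → ℝ) →L[ℝ] (DV d L → ℝ)) where
  toFun := LopC d L
  map_add' a a' := by
    refine ContinuousLinearMap.ext fun u => ?_
    funext x
    have h1 : (fun b => (a + a') b * dgrad d L u b)
        = fun b => (a b * dgrad d L u b) + (a' b * dgrad d L u b) := by
      funext b; simp only [Pi.add_apply]; ring
    show Lop d L (a + a') u x = Lop d L a u x + Lop d L a' u x
    simp only [Lop, h1, dstar_fun_add]
  map_smul' c a := by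
    refine ContinuousLinearMap.ext fun u => ?_
    funext x
    have h1 : (fun b => (c • a) b * dgrad d L u b)
        = fun b => c * (a b * dgrad d L u b) := by
      funext b; simp only [Pi.smul_apply, smul_eq_mul]; ring
    show Lop d L (c • a) u x = c * Lop d L a u x
    simp only [Lop, h1, dstar_fun_smul]

/-- `a ↦ Lop a` as a continuous linear map. -/
def Bc : (DE d L → ℝ) →L[ℝ] ((DV d L → ℝ) →L[ℝ] (DV d L → ℝ)) :=
  (Bl d L).toContinuousLinearMap

lemma Bc_apply (a : DE d L → ℝ) (u : DV d L → ℝ) (x : DV d L) :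
    Bc d L a u x = Lop d L a u x := rfl

/-- The constant part of `Top`. -/
def Zl : (DV d L → ℝ) →ₗ[ℝ] (DV d L → ℝ) where
  toFun u := fun _ => u 0
  map_add' u v := rfl
  map_smul' c u := rfl

def Zc : (DV d L → ℝ) →L[ℝ] (DV d L → ℝ) := (Zl d L).toContinuousLinearMap

lemma TopC_eq (a : DE d L → ℝ) : TopC d L a = Bc d L a + Zc d L := by
  refine ContinuousLinearMap.ext fun u => ?_
  funext x
  rfl

lemma hasFDerivAt_TopC (a : DE d L → ℝ) :
    HasFDerivAt (fun a' => TopC d L a') (Bc d L) a := by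
  have h : (fun a' => TopC d L a') = fun a' => Bc d L a' + Zc d L :=
    funext fun a' => TopC_eq d L a'
  rw [h]
  exact (Bc d L).hasFDerivAt.add_const (Zc d L)

/-- `a ↦ fxi a ξ` as a linear map. -/
def fxiL (ξ : Fin d → ℝ) : (DE d L → ℝ) →ₗ[ℝ] (DV d L → ℝ) where
  toFun a := fxi d L a ξ
  map_add' a a' := by
    funext x
    have h1 : (fun b => (a + a') b * ξ b.2)
        = fun b => (a b * ξ b.2) + (a' b * ξ b.2) := by
      funext b; simp only [Pi.add_apply]; ring
    show -(dstar d L (fun b => (a + a') b * ξ b.2) x) = (fxi d L a ξ + fxi d L a' ξ) x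
    rw [h1, dstar_fun_add]
    simp only [fxi, Pi.add_apply]
    ring
  map_smul' c a := by
    funext x
    have h1 : (fun b => (c • a) b * ξ b.2) = fun b => c * (a b * ξ b.2) := by
      funext b; simp only [Pi.smul_apply, smul_eq_mul]; ring
    show -(dstar d L (fun b => (c • a) b * ξ b.2) x) = (c • fxi d L a ξ) x
    rw [h1, dstar_fun_smul]
    simp only [fxi, Pi.smul_apply, smul_eq_mul]
    ring

def fxiC (ξ : Fin d → ℝ) : (DE d L → ℝ) →L[ℝ] (DV d L → ℝ) :=
  (fxiL d L ξ).toContinuousLinearMap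

/-- The derivative of `Phit` in `a`. -/
def DPhit (ξ : Fin d → ℝ) (a : DE d L → ℝ) : (DE d L → ℝ) →L[ℝ] (DV d L → ℝ) :=
  (Ring.inverse (TopC d L a)).comp (fxiC d L ξ) +
    (((-(ContinuousLinearMap.mulLeftRight ℝ _
        (Ring.inverse (TopC d L a)) (Ring.inverse (TopC d L a)))).comp (Bc d L)).flip
      (fxiC d L ξ a))

lemma hasFDerivAt_Phit (ξ : Fin d → ℝ) (a : DE d L → ℝ) (ha : ∀ b, 0 < a b) :
    HasFDerivAt (fun a' => Phit d L ξ a') (DPhit d L ξ a) a := by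
  obtain ⟨uu, huu⟩ := isUnit_TopC d L a ha
  have hinvc : HasFDerivAt (Ring.inverse :
      ((DV d L → ℝ) →L[ℝ] (DV d L → ℝ)) → ((DV d L → ℝ) →L[ℝ] (DV d L → ℝ)))
      (-(ContinuousLinearMap.mulLeftRight ℝ _ (↑uu⁻¹) (↑uu⁻¹))) (TopC d L a) := by
    rw [← huu]
    exact hasFDerivAt_ringInverse uu
  have hinv2 : (↑uu⁻¹ : (DV d L → ℝ) →L[ℝ] (DV d L → ℝ)) = Ring.inverse (TopC d L a) := by
    rw [← huu, Ring.inverse_unit]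
  rw [hinv2] at hinvc
  have hc : HasFDerivAt (fun a' => Ring.inverse (TopC d L a'))
      ((-(ContinuousLinearMap.mulLeftRight ℝ _
        (Ring.inverse (TopC d L a)) (Ring.inverse (TopC d L a)))).comp (Bc d L)) a :=
    hinvc.comp a (hasFDerivAt_TopC d L a)
  have hu : HasFDerivAt (fun a' => fxiC d L ξ a') (fxiC d L ξ) a :=
    (fxiC d L ξ).hasFDerivAt
  have := hc.clm_apply hu
  exact this

lemma DPhit_single (ξ : Fin d → ℝ) (a : DE d L → ℝ) (e : DE d L) :
    DPhit d L ξ a (Pi.single e 1) = (-(Ff d L ξ a e)) • Ue d L a e := by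
  have hkey : (fxiC d L ξ (Pi.single e 1) : DV d L → ℝ)
        - Bc d L (Pi.single e 1) (Phit d L ξ a)
      = (-(Ff d L ξ a e)) • dstar d L (Pi.single e 1) := by
    funext x
    have h1 : (fun b => (Pi.single e 1 : DE d L → ℝ) b
          * (dgrad d L (Phit d L ξ a) b + ξ b.2))
        = fun b => (Ff d L ξ a e) * (Pi.single e 1 : DE d L → ℝ) b := by
      funext b
      rcases eq_or_ne b e with h | h
      · subst h; simp [Ff]; try ring
      · simp [Pi.single_apply, h]
    have h2 : fxiC d L ξ (Pi.single e 1) x = -(dstar d L (fun b =>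
        (Pi.single e 1 : DE d L → ℝ) b * ξ b.2) x) := rfl
    have h3 : Bc d L (Pi.single e 1) (Phit d L ξ a) x
        = dstar d L (fun b => (Pi.single e 1 : DE d L → ℝ) b
            * dgrad d L (Phit d L ξ a) b) x := rfl
    have h4 : (fun b => (Pi.single e 1 : DE d L → ℝ) b * ξ b.2)
        = fun b => (fun c => (Pi.single e 1 : DE d L → ℝ) c
            * (dgrad d L (Phit d L ξ a) c + ξ c.2)) b
          - (fun c => (Pi.single e 1 : DE d L → ℝ) c * dgrad d L (Phit d L ξ a) c) b := by
      funext b; simp; ring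
    simp only [Pi.sub_apply, h2, h3, Pi.smul_apply, smul_eq_mul]
    have h5 : (fun b => (Pi.single e 1 : DE d L → ℝ) b * ξ b.2)
        = fun b => (Ff d L ξ a e) * (Pi.single e 1 : DE d L → ℝ) b
          - (Pi.single e 1 : DE d L → ℝ) b * dgrad d L (Phit d L ξ a) b := by
      funext b
      rw [← congrFun h1 b]
      ring
    rw [h5]
    have h6 : (fun b => (Ff d L ξ a e) * (Pi.single e 1 : DE d L → ℝ) b
          - (Pi.single e 1 : DE d L → ℝ) b * dgrad d L (Phit d L ξ a) b)
        = fun b => (Ff d L ξ a e) * (Pi.single e 1 : DE d L → ℝ) b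
          + (-1) * ((Pi.single e 1 : DE d L → ℝ) b * dgrad d L (Phit d L ξ a) b) := by
      funext b; ring
    rw [h6, dstar_fun_add, dstar_fun_smul, dstar_fun_smul]
    ring
  have hPhitJ : Ring.inverse (TopC d L a) (fxiC d L ξ a) = Phit d L ξ a := rfl
  simp only [DPhit, ContinuousLinearMap.add_apply, ContinuousLinearMap.comp_apply,
    ContinuousLinearMap.flip_apply, ContinuousLinearMap.neg_apply,
    ContinuousLinearMap.mulLeftRight_apply, ContinuousLinearMap.mul_apply]
  rw [hPhitJ]
  have : Ring.inverse (TopC d L a) (fxiC d L ξ (Pi.single e 1))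
        + -(Ring.inverse (TopC d L a) (Bc d L (Pi.single e 1) (Phit d L ξ a)))
      = Ring.inverse (TopC d L a) ((fxiC d L ξ (Pi.single e 1) : DV d L → ℝ)
          - Bc d L (Pi.single e 1) (Phit d L ξ a)) := by
    rw [map_sub]
    abel
  rw [this, hkey, _root_.map_smul]
  rfl

/-- `dgrad` at a fixed edge as a continuous linear map. -/
def dgradL (b : DE d L) : (DV d L → ℝ) →ₗ[ℝ] ℝ where
  toFun u := dgrad d L u b
  map_add' u v := dgrad_add' d L u v b
  map_smul' c u := dgrad_smul' d L c u b

def dgradC (b : DE d L) : (DV d L → ℝ) →L[ℝ] ℝ := (dgradL d L b).toContinuousLinearMap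

lemma hasFDerivAt_dgradPhit (ξ : Fin d → ℝ) (a : DE d L → ℝ) (ha : ∀ b, 0 < a b)
    (b : DE d L) (c : ℝ) :
    HasFDerivAt (fun a' => dgrad d L (Phit d L ξ a') b + c)
      ((dgradC d L b).comp (DPhit d L ξ a)) a := by
  have h1 : HasFDerivAt (fun a' => dgradC d L b (Phit d L ξ a'))
      ((dgradC d L b).comp (DPhit d L ξ a)) a :=
    (dgradC d L b).hasFDerivAt.comp a (hasFDerivAt_Phit d L ξ a ha)
  exact h1.add_const c

lemma fderiv_dgradPhit_single (ξ : Fin d → ℝ) (a : DE d L → ℝ) (ha : ∀ b, 0 < a b)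
    (b : DE d L) (c : ℝ) (e : DE d L) :
    fderiv ℝ (fun a' => dgrad d L (Phit d L ξ a') b + c) a (Pi.single e 1)
      = -(Ff d L ξ a e) * Gf d L a b e := by
  rw [(hasFDerivAt_dgradPhit d L ξ a ha b c).fderiv]
  rw [ContinuousLinearMap.comp_apply, DPhit_single d L ξ a e]
  show dgrad d L ((-(Ff d L ξ a e)) • Ue d L a e) b = -(Ff d L ξ a e) * Gf d L a b e
  rw [dgrad_smul']
  rfl

/-- The open set of strictly positive coefficient fields. -/
def Upos : Set (DE d L → ℝ) := {a | ∀ b, 0 < a b}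

lemma isOpen_Upos : IsOpen (Upos d L) := by
  have h : Upos d L = ⋂ b, (fun a : DE d L → ℝ => a b) ⁻¹' (Set.Ioi 0) := by
    ext a; simp [Upos]
  rw [h]
  exact isOpen_iInter_of_finite fun b => (continuous_apply b).isOpen_preimage _ isOpen_Ioi

lemma aemeas_of_continuousOn (μ : Measure (DE d L → ℝ)) (hμ : ∀ᵐ a ∂μ, a ∈ Upos d L)
    (F : (DE d L → ℝ) → ℝ) (hF : ∀ a ∈ Upos d L, ContinuousAt F a) : AEMeasurable F μ := by
  have hco : ContinuousOn F (Upos d L) := fun a ha' => (hF a ha').continuousWithinAt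
  have h2 := hco.aemeasurable (μ := μ) (isOpen_Upos d L).measurableSet
  rwa [Measure.restrict_eq_self_of_ae_mem hμ] at h2

lemma hasFDerivAt_Ue' (a : DE d L → ℝ) (ha : ∀ b, 0 < a b) (e : DE d L) :
    ∃ D : (DE d L → ℝ) →L[ℝ] (DV d L → ℝ), HasFDerivAt (fun a' => Ue d L a' e) D a := by
  obtain ⟨uu, huu⟩ := isUnit_TopC d L a ha
  have hinvc : HasFDerivAt (Ring.inverse :
      ((DV d L → ℝ) →L[ℝ] (DV d L → ℝ)) → ((DV d L → ℝ) →L[ℝ] (DV d L → ℝ)))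
      (-(ContinuousLinearMap.mulLeftRight ℝ _ (↑uu⁻¹) (↑uu⁻¹))) (TopC d L a) := by
    rw [← huu]
    exact hasFDerivAt_ringInverse uu
  have hc := hinvc.comp a (hasFDerivAt_TopC d L a)
  have hu : HasFDerivAt (fun _ : DE d L → ℝ => dstar d L (Pi.single e 1))
      (0 : (DE d L → ℝ) →L[ℝ] (DV d L → ℝ)) a := hasFDerivAt_const _ _
  exact ⟨_, hc.clm_apply hu⟩

lemma continuousAt_Gf (a : DE d L → ℝ) (ha : ∀ b, 0 < a b) (b e : DE d L) :
    ContinuousAt (fun a' => Gf d L a' b e) a := by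
  obtain ⟨D, hD⟩ := hasFDerivAt_Ue' d L a ha e
  have h1 : HasFDerivAt (fun a' => dgradC d L b (Ue d L a' e))
      ((dgradC d L b).comp D) a := (dgradC d L b).hasFDerivAt.comp a hD
  exact h1.differentiableAt.continuousAt

lemma continuousAt_Ff (ξ : Fin d → ℝ) (a : DE d L → ℝ) (ha : ∀ b, 0 < a b) (e : DE d L) :
    ContinuousAt (fun a' => Ff d L ξ a' e) a :=
  (hasFDerivAt_dgradPhit d L ξ a ha e (ξ e.2)).differentiableAt.continuousAt

/-- Pointwise Hölder/Jensen step. -/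
lemma hoelder_step (p : ℝ) (hp : 1 ≤ p) (A F : DE d L → ℝ) (hA : ∀ e, 0 ≤ A e) :
    (∑ e, A e * F e ^ 2) ^ p ≤ (∑ e, A e) ^ (p - 1) * ∑ e, A e * |F e| ^ (2 * p) := by
  have hp0 : (0:ℝ) < p := lt_of_lt_of_le one_pos hp
  have habs : ∀ e : DE d L, A e * (F e ^ 2) ^ p = A e * |F e| ^ (2 * p) := by
    intro e
    congr 1
    rw [← sq_abs, ← Real.rpow_natCast |F e| 2, ← Real.rpow_mul (abs_nonneg _)]
    norm_num
  have h := Real.inner_le_weight_mul_Lp_of_nonneg Finset.univ hp A (fun e => F e ^ 2) hA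
    (fun e => sq_nonneg _)
  have hsum_nn : (0:ℝ) ≤ ∑ e, A e * F e ^ 2 :=
    Finset.sum_nonneg fun e _ => mul_nonneg (hA e) (sq_nonneg _)
  have hA_nn : (0:ℝ) ≤ ∑ e, A e := Finset.sum_nonneg fun e _ => hA e
  have hinner_nn : (0:ℝ) ≤ ∑ e, A e * (F e ^ 2) ^ p :=
    Finset.sum_nonneg fun e _ => mul_nonneg (hA e)
      (Real.rpow_nonneg (sq_nonneg _) p)
  have h2 := Real.rpow_le_rpow hsum_nn h hp0.le
  refine le_trans h2 ?_
  rw [Real.mul_rpow (Real.rpow_nonneg hA_nn _) (Real.rpow_nonneg hinner_nn _),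
    ← Real.rpow_mul hA_nn, ← Real.rpow_mul hinner_nn]
  have e1 : (1 - p⁻¹) * p = p - 1 := by field_simp
  have e2 : p⁻¹ * p = 1 := inv_mul_cancel₀ (ne_of_gt hp0)
  rw [e1, e2, Real.rpow_one]
  have e3 : ∑ e, A e * (F e ^ 2) ^ p = ∑ e, A e * |F e| ^ (2 * p) :=
    Finset.sum_congr rfl fun e _ => habs e
  rw [e3]

/-- The cone argument: `fderiv` of any function agreeing with a differentiable one on
the set `{a | lam ≤ a}` is either the expected one (on nonnegative directions) or `0`. -/
lemma cone_fderiv (lam : ℝ) (hlam : 0 < lam) (f g : (DE d L → ℝ) → ℝ)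
    (hfg : ∀ a', (∀ b, lam ≤ a' b) → f a' = g a')
    (a : DE d L → ℝ) (ha : ∀ b, lam ≤ a b)
    (Lg : (DE d L → ℝ) →L[ℝ] ℝ) (hg : HasFDerivAt g Lg a) :
    (∀ v : DE d L → ℝ, (∀ b, 0 ≤ v b) → fderiv ℝ f a v = Lg v)
      ∨ fderiv ℝ f a = 0 := by
  by_cases hdiff : DifferentiableAt ℝ f a
  · left
    intro v hv
    have hf := hdiff.hasFDerivAt
    have hline : HasDerivAt (fun s : ℝ => a + s • v) v 0 := by
      simpa using ((hasDerivAt_id (0:ℝ)).smul_const v).const_add a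
    have h0 : a + (0:ℝ) • v = a := by simp
    have hf' : HasFDerivAt f (fderiv ℝ f a) ((fun s : ℝ => a + s • v) 0) := by
      simpa [h0] using hf
    have hg' : HasFDerivAt g Lg ((fun s : ℝ => a + s • v) 0) := by
      simpa [h0] using hg
    have hfd : HasDerivAt (fun t : ℝ => f (a + t • v)) (fderiv ℝ f a v) 0 :=
      hf'.comp_hasDerivAt 0 hline
    have hgd : HasDerivAt (fun t : ℝ => g (a + t • v)) (Lg v) 0 :=
      hg'.comp_hasDerivAt 0 hline
    have hfw := hfd.hasDerivWithinAt (s := Set.Ici (0:ℝ))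
    have hgw := hgd.hasDerivWithinAt (s := Set.Ici (0:ℝ))
    have hmem : ∀ t ∈ Set.Ici (0:ℝ), ∀ b, lam ≤ (a + t • v) b := by
      intro t ht b
      simp only [Pi.add_apply, Pi.smul_apply, smul_eq_mul]
      have : 0 ≤ t * v b := mul_nonneg ht (hv b)
      linarith [ha b]
    have hgw' : HasDerivWithinAt (fun t : ℝ => f (a + t • v)) (Lg v) (Set.Ici 0) 0 :=
      hgw.congr (fun t ht => hfg _ (hmem t ht)) (hfg _ (hmem 0 (Set.self_mem_Ici)))
    have hud : UniqueDiffWithinAt ℝ (Set.Ici (0:ℝ)) 0 :=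
      uniqueDiffOn_Ici 0 0 Set.self_mem_Ici
    have u1 := hfw.derivWithin hud
    have u2 := hgw'.derivWithin hud
    exact u1.symm.trans u2
  · right
    exact fderiv_zero_of_not_differentiableAt hdiff

/-- Pointwise bound on the integrand of the LHS. -/
lemma main_ptwise (lam : ℝ) (hlam : 0 < lam) (p : ℝ) (hp : 1 ≤ p)
    (ξf : Fin d → ℝ) (Φ : (DE d L → ℝ) → DV d L → ℝ)
    (hΦc : ∀ a', (∀ b, lam ≤ a' b) → Φ a' = Phit d L ξf a') (i : Fin d)
    (a : DE d L → ℝ) (haS : ∀ b, lam ≤ a b) :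
    (∑ e : DE d L, fderiv ℝ (fun a' => dgrad d L (Φ a') ((0 : DV d L), i) + ξf i) a
        (Pi.single e 1) ^ 2) ^ p
      ≤ ((lam ^ 2)⁻¹) ^ (p - 1)
        * ∑ e, Gf d L a ((0 : DV d L), i) e ^ 2 * |Ff d L ξf a e| ^ (2 * p) := by
  have hp0 : (0:ℝ) < p := lt_of_lt_of_le one_pos hp
  have ha' : ∀ b, 0 < a b := fun b => lt_of_lt_of_le hlam (haS b)
  set bi : DE d L := ((0 : DV d L), i) with hbi
  have hRHS_nn : 0 ≤ ∑ e, Gf d L a bi e ^ 2 * |Ff d L ξf a e| ^ (2 * p) :=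
    Finset.sum_nonneg fun e _ =>
      mul_nonneg (sq_nonneg _) (Real.rpow_nonneg (abs_nonneg _) _)
  have hc1_nn : (0:ℝ) ≤ ((lam ^ 2)⁻¹) ^ (p - 1) :=
    Real.rpow_nonneg (by positivity) _
  have hcone := cone_fderiv d L lam hlam
    (fun a' => dgrad d L (Φ a') bi + ξf i)
    (fun a' => dgrad d L (Phit d L ξf a') bi + ξf i)
    (fun a' ha'' => by simp only [hΦc a' ha'']) a haS
    ((dgradC d L bi).comp (DPhit d L ξf a))
    (hasFDerivAt_dgradPhit d L ξf a ha' bi (ξf i))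
  rcases hcone with hL | hL
  · have hval : ∀ e : DE d L,
        fderiv ℝ (fun a' => dgrad d L (Φ a') bi + ξf i) a (Pi.single e 1)
          = -(Ff d L ξf a e) * Gf d L a bi e := by
      intro e
      have hnn : ∀ b, (0:ℝ) ≤ (Pi.single e 1 : DE d L → ℝ) b := by
        intro b
        rcases eq_or_ne b e with h | h
        · subst h; simp
        · simp [Pi.single_apply, h]
      rw [hL (Pi.single e 1) hnn]
      have := fderiv_dgradPhit_single d L ξf a ha' bi (ξf i) e
      rw [← this, (hasFDerivAt_dgradPhit d L ξf a ha' bi (ξf i)).fderiv]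
    have hsum : ∑ e : DE d L,
        fderiv ℝ (fun a' => dgrad d L (Φ a') bi + ξf i) a (Pi.single e 1) ^ 2
        = ∑ e, (Gf d L a bi e ^ 2) * (Ff d L ξf a e) ^ 2 := by
      refine Finset.sum_congr rfl fun e _ => ?_
      rw [hval e]; ring
    rw [hsum]
    calc (∑ e, (Gf d L a bi e ^ 2) * (Ff d L ξf a e) ^ 2) ^ p
        ≤ (∑ e, Gf d L a bi e ^ 2) ^ (p - 1)
            * ∑ e, Gf d L a bi e ^ 2 * |Ff d L ξf a e| ^ (2 * p) :=
          hoelder_step d L p hp _ _ (fun e => sq_nonneg _)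
      _ ≤ ((lam ^ 2)⁻¹) ^ (p - 1)
            * ∑ e, Gf d L a bi e ^ 2 * |Ff d L ξf a e| ^ (2 * p) := by
          refine mul_le_mul_of_nonneg_right ?_ hRHS_nn
          exact Real.rpow_le_rpow (Finset.sum_nonneg fun e _ => sq_nonneg _)
            (Gf_sq_sum_le' d L lam hlam a haS bi) (by linarith)
  · rw [hL]
    simp only [ContinuousLinearMap.zero_apply]
    have h0 : (∑ _x : DE d L, (0:ℝ) ^ 2) = 0 := by simp
    rw [h0, Real.zero_rpow (ne_of_gt hp0)]
    exact mul_nonneg hc1_nn hRHS_nn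

lemma aem_GF (μ : Measure (DE d L → ℝ)) (hμU : ∀ᵐ a ∂μ, a ∈ Upos d L)
    (ξf : Fin d → ℝ) (p : ℝ) (hp : 1 ≤ p) (b e : DE d L) :
    AEMeasurable (fun a => ENNReal.ofReal
      (Gf d L a b e ^ 2 * |Ff d L ξf a e| ^ (2 * p))) μ := by
  have hp0 : (0:ℝ) < p := lt_of_lt_of_le one_pos hp
  refine ENNReal.measurable_ofReal.comp_aemeasurable
    (aemeas_of_continuousOn d L μ hμU _ ?_)
  intro a haU
  have haU' : ∀ c, 0 < a c := haU
  have c1 : ContinuousAt (fun a' => Gf d L a' b e) a := continuousAt_Gf d L a haU' b e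
  have c2 : ContinuousAt (fun a' => Ff d L ξf a' e) a := continuousAt_Ff d L ξf a haU' e
  have c3 : ContinuousAt (fun x : ℝ => |x| ^ (2 * p)) (Ff d L ξf a e) :=
    ContinuousAt.comp (Real.continuousAt_rpow_const _ _ (Or.inr (by positivity)))
      continuous_abs.continuousAt
  exact (c1.pow 2).mul (ContinuousAt.comp (f := fun a' => Ff d L ξf a' e) c3 c2)

lemma main_shift (μ : Measure (DE d L → ℝ))
    (hstat : ∀ z : DV d L,
      μ.map (fun (a : DE d L → ℝ) => fun b : DE d L => a (b.1 + z, b.2)) = μ)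
    (hμU : ∀ᵐ a ∂μ, a ∈ Upos d L)
    (ξf : Fin d → ℝ) (p : ℝ) (hp : 1 ≤ p) (i j : Fin d) (z : DV d L) :
    ∫⁻ a, ENNReal.ofReal
        (Gf d L a ((0 : DV d L), i) (z, j) ^ 2 * |Ff d L ξf a (z, j)| ^ (2 * p)) ∂μ
      = ∫⁻ a, ENNReal.ofReal
        (Gf d L a ((-z : DV d L), i) ((0 : DV d L), j) ^ 2
          * |Ff d L ξf a ((0 : DV d L), j)| ^ (2 * p)) ∂μ := by
  set T : (DE d L → ℝ) → (DE d L → ℝ) := fun a => fun b : DE d L => a (b.1 + (-z), b.2)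
    with hT
  have hTm : Measurable T := measurable_pi_lambda _ fun b => measurable_pi_apply _
  set f : (DE d L → ℝ) → ENNReal := fun a => ENNReal.ofReal
    (Gf d L a ((0 : DV d L), i) (z, j) ^ 2 * |Ff d L ξf a (z, j)| ^ (2 * p)) with hf
  have hfm : AEMeasurable f (μ.map T) := by
    rw [hstat (-z)]
    exact aem_GF d L μ hμU ξf p hp _ _
  have hμU' : ∀ᵐ a ∂μ, (∀ c : DE d L, 0 < a c) := hμU
  calc ∫⁻ a, f a ∂μ = ∫⁻ a, f a ∂(μ.map T) := by rw [hstat (-z)]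
    _ = ∫⁻ a, f (T a) ∂μ := lintegral_map' hfm hTm.aemeasurable
    _ = _ := by
        refine lintegral_congr_ae (hμU'.mono fun a ha' => ?_)
        have hTa : T a = fun b => a (shE d L (-z) b) := rfl
        simp only [hf, hTa]
        have hG := Gf_shift d L a ha' (-z) ((0 : DV d L), i) (z, j)
        have hF := Ff_shift d L a ha' ξf (-z) (z, j)
        rw [hG, hF]
        have h1 : shE d L (-z) ((0 : DV d L), i) = ((-z : DV d L), i) := by
          simp [shE]
        have h2 : shE d L (-z) (z, j) = ((0 : DV d L), j) := by
          simp [shE]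
        rw [h1, h2]

end DiscHom

open DiscHom

/-- **Step 3 in the proof of Theorem 3.** -/
theorem statement12 (d L : ℕ) [NeZero L] (hd : 2 ≤ d) (hL : 1 ≤ L)
    (lam : ℝ) (hlam : lam ∈ Set.Ioo (0 : ℝ) 1)
    (μ : Measure (DE d L → ℝ)) [IsProbabilityMeasure μ]
    (hsupp : ∀ᵐ a ∂μ, ∀ b : DE d L, lam ≤ a b)
    (hstat : ∀ z : DV d L,
      μ.map (fun (a : DE d L → ℝ) => fun b : DE d L => a (b.1 + z, b.2)) = μ)
    (ξ : EuclideanSpace ℝ (Fin d)) (hξ : ‖ξ‖ ≤ 1)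
    (Φ : (DE d L → ℝ) → DV d L → ℝ)
    (hΦ : ∀ a : DE d L → ℝ, (∀ b, lam ≤ a b) → IsDCorrector d L a (fun i => ξ i) (Φ a))
    (p : ℝ) (hp : 1 ≤ p) :
    ∑ i : Fin d, ∫⁻ a, ENNReal.ofReal
        ((∑ e : DE d L,
            fderiv ℝ (fun a' => dgrad d L (Φ a') ((0 : DV d L), i) + ξ i) a
              (Pi.single e 1) ^ 2) ^ p) ∂μ
      ≤ ENNReal.ofReal ((lam ^ 2)⁻¹ ^ p) *
        ∑ i : Fin d, ∫⁻ a, ENNReal.ofReal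
          (|dgrad d L (Φ a) ((0 : DV d L), i) + ξ i| ^ (2 * p)) ∂μ := by
  obtain ⟨hlam0, hlam1⟩ := hlam
  have hp0 : (0:ℝ) < p := lt_of_lt_of_le one_pos hp
  set ξf : Fin d → ℝ := fun i => ξ i with hξf
  have hΦc : ∀ a', (∀ b, lam ≤ a' b) → Φ a' = Phit d L ξf a' := by
    intro a' h
    exact corrector_eq_Phit d L a' (fun b => lt_of_lt_of_le hlam0 (h b)) ξf (Φ a') (hΦ a' h)
  have hμU : ∀ᵐ a ∂μ, a ∈ Upos d L :=
    hsupp.mono fun a h b => lt_of_lt_of_le hlam0 (h b)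
  set c1 : ℝ := ((lam ^ 2)⁻¹) ^ (p - 1) with hc1
  have hc1nn : 0 ≤ c1 := Real.rpow_nonneg (by positivity) _
  set c0 : ℝ := (lam ^ 2)⁻¹ with hc0
  have hc0nn : (0:ℝ) ≤ c0 := by positivity
  set Y : (DE d L → ℝ) → Fin d → DE d L → ℝ :=
    fun a i e => Gf d L a ((0 : DV d L), i) e ^ 2 * |Ff d L ξf a e| ^ (2 * p) with hY
  have hYnn : ∀ a i e, 0 ≤ Y a i e := fun a i e =>
    mul_nonneg (sq_nonneg _) (Real.rpow_nonneg (abs_nonneg _) _)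
  set J : Fin d → DE d L → ENNReal :=
    fun i e => ∫⁻ a, ENNReal.ofReal (Y a i e) ∂μ with hJ
  -- Step A: bound each LHS integral
  have stepA : ∀ i : Fin d,
      ∫⁻ a, ENNReal.ofReal
        ((∑ e : DE d L,
            fderiv ℝ (fun a' => dgrad d L (Φ a') ((0 : DV d L), i) + ξ i) a
              (Pi.single e 1) ^ 2) ^ p) ∂μ
        ≤ ENNReal.ofReal c1 * ∑ e : DE d L, J i e := by
    intro i
    have hmono : ∫⁻ a, ENNReal.ofReal
        ((∑ e : DE d L,
            fderiv ℝ (fun a' => dgrad d L (Φ a') ((0 : DV d L), i) + ξ i) a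
              (Pi.single e 1) ^ 2) ^ p) ∂μ
        ≤ ∫⁻ a, ENNReal.ofReal (c1 * ∑ e, Y a i e) ∂μ := by
      refine lintegral_mono_ae (hsupp.mono fun a haS => ENNReal.ofReal_le_ofReal ?_)
      exact main_ptwise d L lam hlam0 p hp ξf Φ hΦc i a haS
    refine le_trans hmono (le_of_eq ?_)
    calc ∫⁻ a, ENNReal.ofReal (c1 * ∑ e, Y a i e) ∂μ
        = ∫⁻ a, ENNReal.ofReal c1 * ENNReal.ofReal (∑ e, Y a i e) ∂μ :=
          lintegral_congr fun a => ENNReal.ofReal_mul hc1nn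
      _ = ENNReal.ofReal c1 * ∫⁻ a, ENNReal.ofReal (∑ e, Y a i e) ∂μ :=
          lintegral_const_mul' _ _ ENNReal.ofReal_ne_top
      _ = ENNReal.ofReal c1 * ∑ e, J i e := by
          congr 1
          calc ∫⁻ a, ENNReal.ofReal (∑ e, Y a i e) ∂μ
              = ∫⁻ a, ∑ e, ENNReal.ofReal (Y a i e) ∂μ :=
                lintegral_congr fun a =>
                  ENNReal.ofReal_sum_of_nonneg (fun e _ => hYnn a i e)
            _ = ∑ e, J i e :=
                lintegral_finset_sum' _ (fun e _ => aem_GF d L μ hμU ξf p hp _ e)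
  -- The shifted integrals
  set M : Fin d → DE d L → ENNReal := fun j b => ∫⁻ a, ENNReal.ofReal
    (Gf d L a b ((0 : DV d L), j) ^ 2 * |Ff d L ξf a ((0 : DV d L), j)| ^ (2 * p)) ∂μ
    with hM
  have stepD : ∀ i : Fin d, ∑ e : DE d L, J i e = ∑ j : Fin d, ∑ z : DV d L, M j ((-z : DV d L), i) := by
    intro i
    rw [Fintype.sum_prod_type]
    rw [Finset.sum_comm]
    refine Finset.sum_congr rfl fun j _ => Finset.sum_congr rfl fun z _ => ?_
    exact main_shift d L μ hstat hμU ξf p hp i j z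
  have stepE : ∀ j : Fin d, ∑ i : Fin d, ∑ z : DV d L, M j ((-z : DV d L), i)
      = ∑ b : DE d L, M j b := by
    intro j
    have h1 : ∀ i : Fin d, ∑ z : DV d L, M j ((-z : DV d L), i) = ∑ z : DV d L, M j (z, i) := by
      intro i
      exact Fintype.sum_equiv (Equiv.neg (DV d L)) _ _ (fun z => rfl)
    calc ∑ i : Fin d, ∑ z : DV d L, M j ((-z : DV d L), i)
        = ∑ i : Fin d, ∑ z : DV d L, M j (z, i) := Finset.sum_congr rfl fun i _ => h1 i
      _ = ∑ z : DV d L, ∑ i : Fin d, M j (z, i) := Finset.sum_comm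
      _ = ∑ b : DE d L, M j b := (Fintype.sum_prod_type _).symm
  have stepF : ∀ j : Fin d, ∑ b : DE d L, M j b
      ≤ ENNReal.ofReal c0 * ∫⁻ a, ENNReal.ofReal
          (|dgrad d L (Φ a) ((0 : DV d L), j) + ξ j| ^ (2 * p)) ∂μ := by
    intro j
    set W : (DE d L → ℝ) → ℝ := fun a => |Ff d L ξf a ((0 : DV d L), j)| ^ (2 * p) with hW
    have hWnn : ∀ a, 0 ≤ W a := fun a => Real.rpow_nonneg (abs_nonneg _) _
    have h1 : ∑ b : DE d L, M j b
        = ∫⁻ a, ENNReal.ofReal ((∑ b : DE d L, Gf d L a b ((0 : DV d L), j) ^ 2) * W a) ∂μ := by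
      rw [hM]
      rw [← lintegral_finset_sum' _ (fun b _ => aem_GF d L μ hμU ξf p hp b _)]
      refine lintegral_congr fun a => ?_
      rw [Finset.sum_mul, ← ENNReal.ofReal_sum_of_nonneg
        (fun b _ => mul_nonneg (sq_nonneg _) (hWnn a))]
    have h2 : ∫⁻ a, ENNReal.ofReal ((∑ b : DE d L, Gf d L a b ((0 : DV d L), j) ^ 2) * W a) ∂μ
        ≤ ∫⁻ a, ENNReal.ofReal (c0 * W a) ∂μ := by
      refine lintegral_mono_ae (hsupp.mono fun a haS => ENNReal.ofReal_le_ofReal ?_)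
      exact mul_le_mul_of_nonneg_right
        (Gf_sq_sum_le d L lam hlam0 a haS ((0 : DV d L), j)) (hWnn a)
    have h3 : ∫⁻ a, ENNReal.ofReal (c0 * W a) ∂μ
        = ENNReal.ofReal c0 * ∫⁻ a, ENNReal.ofReal (W a) ∂μ := by
      rw [← lintegral_const_mul' _ _ ENNReal.ofReal_ne_top]
      exact lintegral_congr fun a => ENNReal.ofReal_mul hc0nn
    have h4 : ∫⁻ a, ENNReal.ofReal (W a) ∂μ
        = ∫⁻ a, ENNReal.ofReal
          (|dgrad d L (Φ a) ((0 : DV d L), j) + ξ j| ^ (2 * p)) ∂μ := by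
      refine lintegral_congr_ae (hsupp.mono fun a haS => ?_)
      rw [hW]
      simp only
      rw [hΦc a haS]
      rfl
    rw [h1]
    calc ∫⁻ a, ENNReal.ofReal ((∑ b : DE d L, Gf d L a b ((0 : DV d L), j) ^ 2) * W a) ∂μ
        ≤ ∫⁻ a, ENNReal.ofReal (c0 * W a) ∂μ := h2
      _ = ENNReal.ofReal c0 * ∫⁻ a, ENNReal.ofReal (W a) ∂μ := h3
      _ = ENNReal.ofReal c0 * ∫⁻ a, ENNReal.ofReal
          (|dgrad d L (Φ a) ((0 : DV d L), j) + ξ j| ^ (2 * p)) ∂μ := by rw [h4]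
  -- Assemble
  have hconst : ENNReal.ofReal c1 * ENNReal.ofReal c0 = ENNReal.ofReal ((lam ^ 2)⁻¹ ^ p) := by
    rw [← ENNReal.ofReal_mul hc1nn]
    congr 1
    rw [hc1, hc0]
    have hpos : (0:ℝ) < (lam ^ 2)⁻¹ := by positivity
    calc ((lam ^ 2)⁻¹) ^ (p - 1) * (lam ^ 2)⁻¹
        = ((lam ^ 2)⁻¹) ^ (p - 1) * ((lam ^ 2)⁻¹) ^ (1:ℝ) := by rw [Real.rpow_one]
      _ = ((lam ^ 2)⁻¹) ^ (p - 1 + 1) := (Real.rpow_add hpos _ _).symm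
      _ = ((lam ^ 2)⁻¹) ^ p := by rw [sub_add_cancel]
  calc ∑ i : Fin d, ∫⁻ a, ENNReal.ofReal
        ((∑ e : DE d L,
            fderiv ℝ (fun a' => dgrad d L (Φ a') ((0 : DV d L), i) + ξ i) a
              (Pi.single e 1) ^ 2) ^ p) ∂μ
      ≤ ∑ i : Fin d, (ENNReal.ofReal c1 * ∑ e : DE d L, J i e) :=
        Finset.sum_le_sum fun i _ => stepA i
    _ = ENNReal.ofReal c1 * ∑ i : Fin d, ∑ e : DE d L, J i e := by rw [Finset.mul_sum]
    _ = ENNReal.ofReal c1 * ∑ j : Fin d, ∑ b : DE d L, M j b := by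
        congr 1
        calc ∑ i : Fin d, ∑ e : DE d L, J i e
            = ∑ i : Fin d, ∑ j : Fin d, ∑ z : DV d L, M j ((-z : DV d L), i) :=
              Finset.sum_congr rfl fun i _ => stepD i
          _ = ∑ j : Fin d, ∑ i : Fin d, ∑ z : DV d L, M j ((-z : DV d L), i) :=
              Finset.sum_comm
          _ = ∑ j : Fin d, ∑ b : DE d L, M j b :=
              Finset.sum_congr rfl fun j _ => stepE j
    _ ≤ ENNReal.ofReal c1 * ∑ j : Fin d, (ENNReal.ofReal c0 * ∫⁻ a, ENNReal.ofReal
          (|dgrad d L (Φ a) ((0 : DV d L), j) + ξ j| ^ (2 * p)) ∂μ) := by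
        refine mul_le_mul_right (Finset.sum_le_sum fun j _ => stepF j) _
    _ = ENNReal.ofReal ((lam ^ 2)⁻¹ ^ p) *
        ∑ i : Fin d, ∫⁻ a, ENNReal.ofReal
          (|dgrad d L (Φ a) ((0 : DV d L), i) + ξ i| ^ (2 * p)) ∂μ := by
        rw [← Finset.mul_sum, ← mul_assoc, hconst]
end
end

section
/- Let K > 0 and let F : [2,∞) → (0,∞) be differentiable and satisfy the differential inequality q·F'(q) ≤ F(q)·ln F(q) + K·q²·F(q) for all q ≥ 2. Then for every p ≥ 1, F(2p)^{1/p} ≤ exp(4K(p−1))·F(2). -/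
open Set

/-- **Herbst-type ODE lemma.** If `F : [2,∞) → (0,∞)` is differentiable and
satisfies `q F'(q) ≤ F(q) ln F(q) + K q² F(q)`, then `F(2p)^{1/p} ≤ exp(4K(p-1)) F(2)`. -/
theorem statement13 (K : ℝ) (hK : 0 < K) (F F' : ℝ → ℝ)
    (hpos : ∀ q : ℝ, 2 ≤ q → 0 < F q)
    (hderiv : ∀ q : ℝ, 2 ≤ q → HasDerivWithinAt F (F' q) (Set.Ici 2) q)
    (hineq : ∀ q : ℝ, 2 ≤ q → q * F' q ≤ F q * Real.log (F q) + K * q ^ 2 * F q) :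
    ∀ p : ℝ, 1 ≤ p → F (2 * p) ^ (1 / p) ≤ Real.exp (4 * K * (p - 1)) * F 2 := by
  intro p hp
  have hp0 : 0 < p := lt_of_lt_of_le one_pos hp
  set G : ℝ → ℝ := fun q => K * q - Real.log (F q) / q with hG
  -- monotonicity of G on Ici 2
  have hmono : MonotoneOn G (Set.Ici 2) := by
    apply monotoneOn_of_hasDerivWithinAt_nonneg (convex_Ici 2)
      (f' := fun q => K - (F' q / F q * q - Real.log (F q)) / q ^ 2)
    · -- continuity
      intro q hq
      have hq2 : (2:ℝ) ≤ q := hq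
      have hqne : q ≠ 0 := by positivity
      have hF := fun x hx => (hderiv x hx).continuousWithinAt
      exact (continuousWithinAt_const.mul continuousWithinAt_id).sub
        ((((hderiv q hq2).continuousWithinAt.log (hpos q hq2).ne').div
          continuousWithinAt_id hqne))
    · intro q hq
      rw [interior_Ici] at hq ⊢
      have hq2 : (2:ℝ) ≤ q := le_of_lt hq
      have hqne : q ≠ 0 := by positivity
      have h1 : HasDerivWithinAt (fun q => Real.log (F q)) (F' q / F q) (Set.Ioi 2) q :=
        ((hderiv q hq2).mono (Set.Ioi_subset_Ici le_rfl)).log (hpos q hq2).ne'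
      have h2 : HasDerivWithinAt (fun q => Real.log (F q) / q)
          ((F' q / F q * q - Real.log (F q) * 1) / q ^ 2) (Set.Ioi 2) q :=
        h1.div (hasDerivWithinAt_id q _) hqne
      have h3 : HasDerivWithinAt (fun q => K * q) K (Set.Ioi 2) q := by
        simpa using (hasDerivWithinAt_id q (Set.Ioi 2)).const_mul K
      exact (h3.sub h2).congr_deriv (by ring)
    · intro q hq
      rw [interior_Ici] at hq
      have hq2 : (2:ℝ) ≤ q := le_of_lt hq
      have hFq : 0 < F q := hpos q hq2
      have hq0 : 0 < q := by linarith
      have key : F' q / F q * q - Real.log (F q) ≤ K * q ^ 2 := by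
        have h := hineq q hq2
        rw [div_mul_eq_mul_div, sub_le_iff_le_add, div_le_iff₀ hFq]
        calc F' q * q = q * F' q := by ring
          _ ≤ F q * Real.log (F q) + K * q ^ 2 * F q := h
          _ = (K * q ^ 2 + Real.log (F q)) * F q := by ring
      have : (F' q / F q * q - Real.log (F q)) / q ^ 2 ≤ K := by
        rw [div_le_iff₀ (by positivity)]; linarith
      linarith
  -- apply monotonicity at 2 and 2p
  have h2p : (2:ℝ) ≤ 2 * p := by linarith
  have hGle : G 2 ≤ G (2 * p) := hmono (Set.self_mem_Ici) h2p h2p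
  simp only [hG] at hGle
  have hF2 : 0 < F 2 := hpos 2 le_rfl
  have hF2p : 0 < F (2 * p) := hpos _ h2p
  have hlog : Real.log (F (2 * p)) / (2 * p) ≤ Real.log (F 2) / 2 + 2 * K * (p - 1) := by
    nlinarith [hGle]
  have hlog2 : (1 / p) * Real.log (F (2 * p)) ≤ 4 * K * (p - 1) + Real.log (F 2) := by
    have h2p0 : 0 < 2 * p := by linarith
    rw [div_le_iff₀ h2p0] at hlog
    rw [one_div, inv_mul_le_iff₀ hp0]
    nlinarith [hlog]
  calc F (2 * p) ^ (1 / p) = Real.exp ((1 / p) * Real.log (F (2 * p))) := by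
        rw [Real.rpow_def_of_pos hF2p, mul_comm]
    _ ≤ Real.exp (4 * K * (p - 1) + Real.log (F 2)) := Real.exp_le_exp.mpr hlog2
    _ = Real.exp (4 * K * (p - 1)) * F 2 := by
        rw [Real.exp_add, Real.exp_log hF2]
end
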